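/- Let n ≥ 1, let σ be a permutation of Fin n, let a : Fin n → ℕ satisfy a i ≥ 2 for every i, and let f(z) = ∑ i, (z i)^(a i) * conj(z (σ i)) be the twisted Pham–Brieskorn polynomial. Then f is polar weighted homogeneous: there exist positive integers d₁, …, d_n, p₁, …, p_n and positive integers d, p such that for every λ ∈ ℂ with ‖λ‖ = 1, every real r > 0, and every z, one has f(fun j => λ^(d_j) * (r:ℂ)^(p_j) * z j) = λ^d * (r:ℝ)^p * f(z). -/

import Mathlib

private def Wrec (ε : ℤ) (c : ℕ → ℤ) : ℕ → ℤ
  | 0 => 0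
  | (m+1) => c m * Wrec ε c m + ε ^ m

private lemma Wrec_succ (ε : ℤ) (c : ℕ → ℤ) (m : ℕ) :
    Wrec ε c (m+1) = c m * Wrec ε c m + ε ^ m := rfl

private lemma Wrec_shift (ε : ℤ) (m : ℕ) : ∀ c : ℕ → ℤ,
    Wrec ε c (m+1) = (∏ j ∈ Finset.range m, c (j+1)) + ε * Wrec ε (fun j => c (j+1)) m := by
  induction m with
  | zero => intro c; simp [Wrec]
  | succ m ih =>
      intro c
      rw [Wrec_succ, ih c, Finset.prod_range_succ, Wrec_succ]
      ring

private lemma Wrec_one_nonneg (c : ℕ → ℤ) (hc : ∀ j, 2 ≤ c j) (m : ℕ) : 0 ≤ Wrec 1 c m := by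
  induction m with
  | zero => simp [Wrec]
  | succ m ih =>
      rw [Wrec_succ]
      simp only [one_pow]
      nlinarith [hc m]

private lemma Wrec_one_pos (c : ℕ → ℤ) (hc : ∀ j, 2 ≤ c j) (m : ℕ) : 0 < Wrec 1 c (m+1) := by
  rw [Wrec_succ]
  simp only [one_pow]
  nlinarith [Wrec_one_nonneg c hc m, hc m]

private lemma Wrec_neg_nonneg (c : ℕ → ℤ) (hc : ∀ j, 2 ≤ c j) :
    ∀ M, 0 ≤ Wrec (-1) c (2*M) := by
  intro M
  induction M with
  | zero => simp [Wrec]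
  | succ M ih =>
      rw [show 2*(M+1) = (2*M+1)+1 from by ring, Wrec_succ, Wrec_succ]
      rw [Odd.neg_one_pow ⟨M, rfl⟩, Even.neg_one_pow ⟨M, by ring⟩]
      have h0 : 0 ≤ c (2*M) * Wrec (-1) c (2*M) :=
        mul_nonneg (by linarith [hc (2*M)]) ih
      nlinarith [h0, hc (2*M+1), mul_le_mul_of_nonneg_right (hc (2*M+1))
        (by linarith : (0:ℤ) ≤ c (2*M) * Wrec (-1) c (2*M) + 1)]

private lemma Wrec_neg_pos (c : ℕ → ℤ) (hc : ∀ j, 2 ≤ c j) (M : ℕ) :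
    0 < Wrec (-1) c (2*M+2) := by
  rw [show 2*M+2 = (2*M+1)+1 from rfl, Wrec_succ, Wrec_succ]
  rw [Odd.neg_one_pow ⟨M, rfl⟩, Even.neg_one_pow ⟨M, by ring⟩]
  have h0 : 0 ≤ c (2*M) * Wrec (-1) c (2*M) :=
    mul_nonneg (by linarith [hc (2*M)]) (Wrec_neg_nonneg c hc M)
  nlinarith [h0, hc (2*M+1), mul_le_mul_of_nonneg_right (hc (2*M+1))
    (by linarith : (0:ℤ) ≤ c (2*M) * Wrec (-1) c (2*M) + 1)]

private lemma prod_shift (c : ℕ → ℤ) (m : ℕ) (hm : 0 < m) (hc : c m = c 0) :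
    ∏ j ∈ Finset.range m, c (j+1) = ∏ j ∈ Finset.range m, c j := by
  obtain ⟨k, rfl⟩ : ∃ k, m = k + 1 := ⟨m - 1, by omega⟩
  rw [Finset.prod_range_succ, Finset.prod_range_succ', hc]

private lemma Wrec_key (ε : ℤ) (c : ℕ → ℤ) (m : ℕ) (hm : 0 < m) (hc : c m = c 0) :
    c 0 * Wrec ε c m + ε ^ m
      = (∏ j ∈ Finset.range m, c j) + ε * Wrec ε (fun j => c (j+1)) m := by
  have h1 := Wrec_succ ε c m
  have h2 := Wrec_shift ε m c
  rw [prod_shift c m hm hc] at h2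
  rw [← hc]
  linarith [h1, h2]



/-- The twisted Pham–Brieskorn polynomial
`f z = ∑ i, (z i)^(a i) · conj (z (σ i))` is polar weighted homogeneous:
there are positive integer weights `dw j`, `pw j` and positive integers
`d`, `p` such that for every unit complex number `λ`, every real `r > 0`
and every `z`, `f ((λ, r) · z) = λ^d · r^p · f z`, where
`(λ, r) · z = fun j => λ^(dw j) * r^(pw j) * z j`. -/
theorem twistedPhamBrieskorn_polar_weighted_homogeneous
    (n : ℕ) (hn : 1 ≤ n) (σ : Equiv.Perm (Fin n))
    (a : Fin n → ℕ) (ha : ∀ i, 2 ≤ a i) :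
    ∃ (dw pw : Fin n → ℕ) (d p : ℕ),
      (∀ j, 0 < dw j) ∧ (∀ j, 0 < pw j) ∧ 0 < d ∧ 0 < p ∧
        ∀ (lam : ℂ), ‖lam‖ = 1 → ∀ (r : ℝ), 0 < r → ∀ z : Fin n → ℂ,
          (fun w : Fin n → ℂ => ∑ i, w i ^ a i * (starRingEnd ℂ) (w (σ i)))
              (fun j => lam ^ dw j * (r : ℂ) ^ pw j * z j) =
            lam ^ d * ((r ^ p : ℝ) : ℂ) *
              (fun w : Fin n → ℂ => ∑ i, w i ^ a i * (starRingEnd ℂ) (w (σ i))) z := by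
  classical
  set m : ℕ := 2 * orderOf σ with hmdef
  have hmorder : 0 < orderOf σ := orderOf_pos σ
  have hm0 : 0 < m := by omega
  have hσ : σ ^ m = 1 := by
    rw [hmdef, mul_comm, pow_mul, pow_orderOf_eq_one, one_pow]
  set c : Fin n → ℕ → ℤ := fun i j => (a ((σ ^ j) i) : ℤ) with hcdef
  have hc2 : ∀ i j, 2 ≤ c i j := by
    intro i j
    simp only [hcdef]
    exact_mod_cast ha _
  have hcshift : ∀ i, (fun j => c i (j+1)) = c (σ i) := by
    intro i; funext j
    simp only [hcdef, pow_succ, Equiv.Perm.mul_apply]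
  have hcper : ∀ i, c i m = c i 0 := by
    intro i; simp [hcdef, hσ]
  set P : Fin n → ℤ := fun i => ∏ j ∈ Finset.range m, c i j with hPdef
  have hone : ∀ (f : ℕ → ℤ), (∀ j, 1 ≤ f j) → ∀ s : Finset ℕ, 1 ≤ ∏ j ∈ s, f j := by
    intro f hf s
    have h := Finset.prod_le_prod (s := s) (f := fun _ : ℕ => (1:ℤ)) (g := f)
      (fun j _ => by norm_num) (fun j _ => hf j)
    simpa using h
  have hP2 : ∀ i, 2 ≤ P i := by
    intro i
    obtain ⟨k, hk⟩ : ∃ k, m = k + 1 := ⟨m - 1, by omega⟩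
    simp only [hPdef]
    rw [hk, Finset.prod_range_succ']
    have h1 := hone (fun j => c i (j+1)) (fun j => by linarith [hc2 i (j+1)]) (Finset.range k)
    have h2 := hc2 i 0
    nlinarith
  have hPσ : ∀ i, P (σ i) = P i := by
    intro i
    simp only [hPdef, ← hcshift i]
    exact prod_shift (c i) m hm0 (hcper i)
  set T : Fin n → ℤ := fun i => Wrec 1 (c i) m with hTdef
  set U : Fin n → ℤ := fun i => Wrec (-1) (c i) m with hUdef
  have hTpos : ∀ i, 0 < T i := by
    intro i
    have h := Wrec_one_pos (c i) (hc2 i) (m - 1)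
    rwa [show m - 1 + 1 = m from by omega] at h
  have hUpos : ∀ i, 0 < U i := by
    intro i
    have h := Wrec_neg_pos (c i) (hc2 i) (orderOf σ - 1)
    rwa [show 2 * (orderOf σ - 1) + 2 = m from by omega] at h
  have hTkey : ∀ i, (a i : ℤ) * T i + 1 = P i + T (σ i) := by
    intro i
    have h := Wrec_key 1 (c i) m hm0 (hcper i)
    rw [hcshift i] at h
    have hc0 : c i 0 = (a i : ℤ) := by simp [hcdef]
    rw [hc0, one_pow, one_mul] at h
    exact h
  have hUkey : ∀ i, (a i : ℤ) * U i + U (σ i) = P i - 1 := by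
    intro i
    have h := Wrec_key (-1) (c i) m hm0 (hcper i)
    rw [hcshift i] at h
    have hev : ((-1:ℤ)) ^ m = 1 := Even.neg_one_pow ⟨orderOf σ, by omega⟩
    have hc0 : c i 0 = (a i : ℤ) := by simp [hcdef]
    rw [hev, hc0] at h
    linarith
  set D : Fin n → ℤ := fun i => ∏ j ∈ Finset.univ.erase i, (P j - 1) with hDdef
  set dZ : ℤ := ∏ j, (P j - 1) with hdZdef
  have hDmul : ∀ i, D i * (P i - 1) = dZ := fun i =>
    Finset.prod_erase_mul _ _ (Finset.mem_univ i)
  have hDpos : ∀ i, 0 < D i := fun i =>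
    Finset.prod_pos (fun j _ => by linarith [hP2 j])
  have hdZpos : 0 < dZ := Finset.prod_pos (fun j _ => by linarith [hP2 j])
  have hDσ : ∀ i, D (σ i) = D i := by
    intro i
    have h1 := hDmul i
    have h2 := hDmul (σ i)
    rw [hPσ i] at h2
    have hne : P i - 1 ≠ 0 := by have := hP2 i; omega
    exact mul_right_cancel₀ hne (h2.trans h1.symm)
  have hdwZ : ∀ i, (a i : ℤ) * (T i * D i) = dZ + T (σ i) * D (σ i) := by
    intro i
    have h := hTkey i
    have h2 := hDmul i
    rw [hDσ i]
    linear_combination D i * h + h2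
  have hpwZ : ∀ i, (a i : ℤ) * (U i * D i) + U (σ i) * D (σ i) = dZ := by
    intro i
    have h := hUkey i
    have h2 := hDmul i
    rw [hDσ i]
    linear_combination D i * h + h2
  set dwN : Fin n → ℕ := fun i => (T i * D i).toNat with hdwNdef
  set pwN : Fin n → ℕ := fun i => (U i * D i).toNat with hpwNdef
  set dN : ℕ := dZ.toNat with hdNdef
  have hdwNC : ∀ i, (dwN i : ℤ) = T i * D i := fun i =>
    Int.toNat_of_nonneg (le_of_lt (mul_pos (hTpos i) (hDpos i)))
  have hpwNC : ∀ i, (pwN i : ℤ) = U i * D i := fun i =>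
    Int.toNat_of_nonneg (le_of_lt (mul_pos (hUpos i) (hDpos i)))
  have hdNC : (dN : ℤ) = dZ := Int.toNat_of_nonneg (le_of_lt hdZpos)
  have hdw : ∀ i, a i * dwN i = dN + dwN (σ i) := by
    intro i
    have : ((a i * dwN i : ℕ) : ℤ) = ((dN + dwN (σ i) : ℕ) : ℤ) := by
      push_cast
      rw [hdwNC i, hdwNC (σ i), hdNC]
      exact hdwZ i
    exact_mod_cast this
  have hpw : ∀ i, a i * pwN i + pwN (σ i) = dN := by
    intro i
    have : ((a i * pwN i + pwN (σ i) : ℕ) : ℤ) = ((dN : ℕ) : ℤ) := by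
      push_cast
      rw [hpwNC i, hpwNC (σ i), hdNC]
      exact hpwZ i
    exact_mod_cast this
  refine ⟨dwN, pwN, dN, dN, ?_, ?_, ?_, ?_, ?_⟩
  · intro j; have := mul_pos (hTpos j) (hDpos j); simp only [hdwNdef]; omega
  · intro j; have := mul_pos (hUpos j) (hDpos j); simp only [hpwNdef]; omega
  · simp only [hdNdef]; omega
  · simp only [hdNdef]; omega
  · intro lam hlam r hr z
    have hl : lam * (starRingEnd ℂ) lam = 1 := by
      rw [Complex.mul_conj, Complex.normSq_eq_norm_sq, hlam]
      norm_num
    simp only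
    have hterm : ∀ i : Fin n,
        (lam ^ dwN i * (r:ℂ) ^ pwN i * z i) ^ a i *
          (starRingEnd ℂ) (lam ^ dwN (σ i) * (r:ℂ) ^ pwN (σ i) * z (σ i)) =
        lam ^ dN * (r:ℂ) ^ dN * (z i ^ a i * (starRingEnd ℂ) (z (σ i))) := by
      intro i
      have e1 : a i * dwN i = dN + dwN (σ i) := hdw i
      have e2 : a i * pwN i + pwN (σ i) = dN := hpw i
      rw [map_mul, map_mul, map_pow, map_pow, Complex.conj_ofReal]
      rw [mul_pow, mul_pow, ← pow_mul, ← pow_mul]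
      have h3 : lam ^ (dwN i * a i) * (starRingEnd ℂ) lam ^ dwN (σ i) = lam ^ dN := by
        rw [mul_comm (dwN i), e1, pow_add, mul_assoc, ← mul_pow, hl, one_pow, mul_one]
      have h4 : (r:ℂ) ^ (pwN i * a i) * (r:ℂ) ^ pwN (σ i) = (r:ℂ) ^ dN := by
        rw [← pow_add, mul_comm (pwN i), e2]
      calc (lam ^ (dwN i * a i) * (r:ℂ) ^ (pwN i * a i) * z i ^ a i) *
            ((starRingEnd ℂ) lam ^ dwN (σ i) * (r:ℂ) ^ pwN (σ i) *
              (starRingEnd ℂ) (z (σ i)))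
          = (lam ^ (dwN i * a i) * (starRingEnd ℂ) lam ^ dwN (σ i)) *
              ((r:ℂ) ^ (pwN i * a i) * (r:ℂ) ^ pwN (σ i)) *
              (z i ^ a i * (starRingEnd ℂ) (z (σ i))) := by ring
        _ = lam ^ dN * (r:ℂ) ^ dN * (z i ^ a i * (starRingEnd ℂ) (z (σ i))) := by
            rw [h3, h4]
    calc ∑ i, (lam ^ dwN i * (r:ℂ) ^ pwN i * z i) ^ a i *
          (starRingEnd ℂ) (lam ^ dwN (σ i) * (r:ℂ) ^ pwN (σ i) * z (σ i))
        = ∑ i, lam ^ dN * (r:ℂ) ^ dN * (z i ^ a i * (starRingEnd ℂ) (z (σ i))) :=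
          Finset.sum_congr rfl (fun i _ => hterm i)
      _ = lam ^ dN * ((r ^ dN : ℝ) : ℂ) *
            ∑ i, z i ^ a i * (starRingEnd ℂ) (z (σ i)) := by
          rw [← Finset.mul_sum, Complex.ofReal_pow]
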